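/- Let M be a positive integer and f : ℤ → ℂ an odd M-periodic function (f(-n) = -f(n)). Then for every τ ∈ ℍ: Θ(τ; 1, f, M) = i · (τ/i)^{-3/2} · Θ(-1/τ; 1, U_M f, M), where U_M f is the discrete Fourier transform of f (an odd M-periodic function) and (τ/i)^{-3/2} is the principal branch. -/

import Mathlib

open Complex

/-- The partial theta series `Θ(τ; ν, f, M) = Σ_{n≥1} n^ν f(n) e^{iπn²τ/M}`. -/
noncomputable def theta (M : ℕ) (ν : ℕ) (f : ℤ → ℂ) (τ : ℂ) : ℂ :=
  ∑' n : ℕ, ((n : ℂ) + 1) ^ ν * f (n + 1) *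
    Complex.exp (Real.pi * Complex.I * ((n : ℂ) + 1) ^ 2 * τ / M)

/-- The discrete Fourier transform `U_M f` of an `M`-periodic function `f : ℤ → ℂ`. -/
noncomputable def dft (M : ℕ) (f : ℤ → ℂ) (n : ℤ) : ℂ :=
  (Real.sqrt M : ℂ)⁻¹ * ∑ ℓ ∈ Finset.range M, f ℓ *
    Complex.exp (-2 * Real.pi * Complex.I * ℓ * n / M)

namespace Stmt10

lemma per {M : ℕ} {f : ℤ → ℂ} (hf : ∀ n : ℤ, f (n + M) = f n) (n m : ℤ) :
    f (n + M * m) = f n := by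
  induction m using Int.induction_on with
  | zero => simp
  | succ k ih =>
      have h := hf (n + M * k)
      rw [show n + (M : ℤ) * ((k : ℤ) + 1) = n + (M : ℤ) * k + M by ring, h]
      exact ih
  | pred k ih =>
      have h := hf (n + M * (-(k : ℤ) - 1))
      rw [show n + (M : ℤ) * (-(k : ℤ) - 1) + M = n + M * (-(k : ℤ)) by ring] at h
      rw [← h]
      exact ih

lemma half (M : ℕ) {g : ℤ → ℂ} (hg : ∀ n : ℤ, g (-n) = -g n) (σ : ℂ) {s : ℂ}
    (h : HasSum (fun n : ℤ ↦ (n : ℂ) * g n *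
      Complex.exp (Real.pi * Complex.I * (n : ℂ) ^ 2 * σ / M)) s) :
    theta M 1 g σ = s / 2 := by
  set G : ℤ → ℂ := fun n ↦ (n : ℂ) * g n *
      Complex.exp (Real.pi * Complex.I * (n : ℂ) ^ 2 * σ / M) with hGdef
  have hGeven : ∀ n : ℤ, G (-n) = G n := by
    intro n
    simp only [hGdef, Int.cast_neg, hg, neg_sq]
    ring
  have hG0 : G 0 = 0 := by simp [hGdef]
  have h1 : HasSum (fun n : ℕ ↦ 2 * G n) s := by
    have h2 := h.nat_add_neg
    rw [hG0, add_zero] at h2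
    have e : (fun n : ℕ ↦ G (n : ℤ) + G (-(n : ℤ))) = fun n : ℕ ↦ 2 * G n := by
      funext n; rw [hGeven, two_mul]
    rwa [e] at h2
  have h2 : HasSum (fun n : ℕ ↦ G n) (s / 2) := by
    have h3 := h1.div_const 2
    have e : (fun n : ℕ ↦ 2 * G n / 2) = fun n : ℕ ↦ G n := by
      funext n; rw [mul_div_cancel_left₀ _ (two_ne_zero)]
    rwa [e] at h3
  have h3 : HasSum (fun n : ℕ ↦ G ((n + 1 : ℕ) : ℤ)) (s / 2) := by
    refine (hasSum_nat_add_iff (f := fun n : ℕ ↦ G n) 1).mpr ?_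
    simpa [hG0] using h2
  have e : (fun n : ℕ ↦ G ((n + 1 : ℕ) : ℤ)) = fun n : ℕ ↦ ((n : ℂ) + 1) ^ 1 * g (n + 1) *
      Complex.exp (Real.pi * Complex.I * ((n : ℂ) + 1) ^ 2 * σ / M) := by
    funext n
    simp only [hGdef, pow_one]
    push_cast
    ring_nf
  rw [e] at h3
  rw [theta]
  exact h3.tsum_eq


lemma hasSum_theta'' (z : ℂ) {T : ℂ} (hT : 0 < T.im) :
    HasSum (fun n : ℤ ↦ ((n : ℂ) + z) *
        Complex.exp (Real.pi * Complex.I * ((n : ℂ) + z) ^ 2 * T))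
      (HurwitzZeta.jacobiTheta₂'' z T) := by
  rw [HurwitzZeta.jacobiTheta₂'']
  have h1 := hasSum_jacobiTheta₂_term (z * T) hT
  have h2 := hasSum_jacobiTheta₂'_term (z * T) hT
  have h := ((h2.div_const (2 * Real.pi * Complex.I)).add (h1.mul_left z)).mul_left
      (Complex.exp (Real.pi * Complex.I * z ^ 2 * T))
  have e : (fun n : ℤ ↦ Complex.exp (Real.pi * Complex.I * z ^ 2 * T) *
      (jacobiTheta₂'_term n (z * T) T / (2 * Real.pi * Complex.I) +
        z * jacobiTheta₂_term n (z * T) T)) = fun n : ℤ ↦ ((n : ℂ) + z) *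
      Complex.exp (Real.pi * Complex.I * ((n : ℂ) + z) ^ 2 * T) := by
    funext n
    rw [jacobiTheta₂'_term, mul_assoc (2 * (Real.pi : ℂ) * Complex.I),
      mul_div_cancel_left₀ _ two_pi_I_ne_zero, jacobiTheta₂_term, ← add_mul, mul_left_comm,
      ← Complex.exp_add]
    congrm (_ * Complex.exp ?_)
    ring
  rwa [e] at h

lemma shift_sum (M : ℕ) (h : ℕ → ℂ) (hper : h M = h 0) :
    ∑ j ∈ Finset.range M, h (j + 1) = ∑ j ∈ Finset.range M, h j := by
  have h1 := Finset.sum_range_succ' h M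
  have h2 := Finset.sum_range_succ h M
  rw [hper] at h2
  exact add_right_cancel (h1.symm.trans h2)

lemma sum_exp {M : ℕ} (hM : 0 < M) {f : ℤ → ℂ} (hf : ∀ n : ℤ, f (n + M) = f n)
    (hodd : ∀ n : ℤ, f (-n) = -f n) (m : ℤ) :
    ∑ a ∈ Finset.range M, f a * Complex.exp (2 * Real.pi * Complex.I * a * m / M)
      = -(Real.sqrt M : ℂ) * dft M f m := by
  have hf0 : f 0 = 0 := by
    have h := hodd 0
    rw [neg_zero] at h
    linear_combination h / 2
  have hs : ((Real.sqrt M : ℝ) : ℂ) ≠ 0 := by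
    simp only [ne_eq, ofReal_eq_zero]
    positivity
  have hM0 : (M : ℂ) ≠ 0 := Nat.cast_ne_zero.mpr hM.ne'
  rw [dft, ← mul_assoc, neg_mul, mul_inv_cancel₀ hs, neg_mul, one_mul, ← Finset.sum_neg_distrib]
  rw [← Finset.sum_range_reflect]
  have step : ∀ j ∈ Finset.range M,
      f ↑(M - 1 - j) * Complex.exp (2 * Real.pi * Complex.I * ↑(M - 1 - j) * m / M)
      = -(f ((j : ℤ) + 1) *
          Complex.exp (-2 * Real.pi * Complex.I * ((j : ℂ) + 1) * m / M)) := by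
    intro j hj
    have hjM : j < M := Finset.mem_range.mp hj
    have hz : ((M - 1 - j : ℕ) : ℤ) = (M : ℤ) - 1 - j := by omega
    have hc : ((M - 1 - j : ℕ) : ℂ) = (M : ℂ) - 1 - j := by exact_mod_cast congrArg (Int.cast : ℤ → ℂ) hz
    rw [hz, hc]
    rw [show (M : ℤ) - 1 - (j : ℤ) = -((j : ℤ) + 1) + M by ring, hf, hodd]
    rw [show (2 * (Real.pi : ℂ) * Complex.I * ((M : ℂ) - 1 - j) * m / M : ℂ)
        = (-2 * Real.pi * Complex.I * ((j : ℂ) + 1) * m / M) + m * (2 * Real.pi * Complex.I) from by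
      field_simp
      ring, Complex.exp_add, Complex.exp_int_mul_two_pi_mul_I, mul_one]
    push_cast
    ring
  rw [Finset.sum_congr rfl step]
  have hfM : f (M : ℤ) = 0 := by
    have h0 := hf 0
    rw [zero_add] at h0
    rw [h0, hf0]
  have hsh := shift_sum M
      (fun j : ℕ ↦ -(f (j : ℤ) * Complex.exp (-2 * Real.pi * Complex.I * (j : ℂ) * m / M)))
      (by simp [hfM, hf0])
  refine (Finset.sum_congr rfl fun j _ ↦ ?_).trans hsh
  push_cast
  ring_nf


lemma const_eq (M : ℕ) (hM : 0 < M) {τ : ℂ} (hτ : 0 < τ.im) :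
    Complex.I * ((Real.sqrt M : ℂ) * M) * (-Complex.I * (-1 / ((M : ℂ) * τ))) ^ ((3 : ℂ) / 2)
      = Complex.I * (τ / Complex.I) ^ (-(3 / 2) : ℂ) := by
  have hτ0 : τ ≠ 0 := fun h ↦ by simp [h] at hτ
  have hM0 : (M : ℂ) ≠ 0 := Nat.cast_ne_zero.mpr hM.ne'
  have hMR : (0 : ℝ) < M := by exact_mod_cast hM
  set w : ℂ := τ / Complex.I with hw
  have hwre : 0 < w.re := by
    rw [hw, Complex.div_I]
    simpa using hτ
  have hwne : w ≠ 0 := fun h ↦ by rw [h] at hwre; simp at hwre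
  have hMw : (-Complex.I * (-1 / ((M : ℂ) * τ))) = ((M : ℂ) * w)⁻¹ := by
    rw [hw]
    field_simp
  have hargMw : ((M : ℂ) * w).arg ≠ Real.pi := by
    have hre : 0 < ((M : ℂ) * w).re := by
      have : ((M : ℂ) * w).re = (M : ℝ) * w.re := by
        simp [Complex.mul_re]
      rw [this]
      positivity
    intro h
    rw [Complex.arg_eq_pi_iff] at h
    linarith [h.1]
  have hsplit : ((M : ℂ) * w) ^ ((3 : ℂ) / 2) = (M : ℂ) ^ ((3 : ℂ) / 2) * w ^ ((3 : ℂ) / 2) := by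
    rw [cpow_def_of_ne_zero (mul_ne_zero hM0 hwne), cpow_def_of_ne_zero hM0,
      cpow_def_of_ne_zero hwne, ← Complex.exp_add, ← add_mul]
    congr 2
    rw [show ((M : ℂ) = ((M : ℝ) : ℂ)) from by push_cast; ring,
      Complex.log_ofReal_mul hMR hwne, Complex.ofReal_log hMR.le]
  have hM32 : ((Real.sqrt M : ℂ) * M) = (M : ℂ) ^ ((3 : ℂ) / 2) := by
    have h1 : (M : ℝ) ^ ((3 : ℝ) / 2) = Real.sqrt M * M := by
      rw [show (3 : ℝ) / 2 = 1 / 2 + 1 by norm_num, Real.rpow_add hMR, Real.rpow_one,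
        ← Real.sqrt_eq_rpow]
    have h2 : ((M : ℝ) : ℂ) ^ (((3 : ℝ) / 2 : ℝ) : ℂ) = (((M : ℝ) ^ ((3 : ℝ) / 2) : ℝ) : ℂ) :=
      (Complex.ofReal_cpow hMR.le _).symm
    rw [show (((3 : ℝ) / 2 : ℝ) : ℂ) = ((3 : ℂ) / 2) by push_cast; ring] at h2
    rw [show ((M : ℝ) : ℂ) = (M : ℂ) by push_cast; ring] at h2
    rw [h2, h1]
    push_cast
    ring
  have hM32ne : (M : ℂ) ^ ((3 : ℂ) / 2) ≠ 0 := by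
    rw [Ne, Complex.cpow_eq_zero_iff]
    push_neg
    intro h
    exact absurd h hM0
  rw [hMw, Complex.inv_cpow _ _ hargMw, hsplit, hM32,
    show (-(3 / 2) : ℂ) = -((3 : ℂ) / 2) by norm_num, Complex.cpow_neg]
  rw [mul_inv]
  rw [mul_assoc, ← mul_assoc ((M : ℂ) ^ ((3 : ℂ) / 2)), mul_inv_cancel₀ hM32ne, one_mul]


end Stmt10

/-- For an odd `M`-periodic `f`, the weight 3/2 modularity relation
`Θ(τ;1,f,M) = i (τ/i)^{-3/2} Θ(-1/τ; 1, U_M f, M)` holds for all `τ ∈ ℍ`. -/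
theorem statement10 (M : ℕ) (hM : 0 < M) (f : ℤ → ℂ)
    (hf : ∀ n : ℤ, f (n + M) = f n) (hodd : ∀ n : ℤ, f (-n) = -f n)
    (τ : ℂ) (hτ : 0 < τ.im) :
    theta M 1 f τ
      = Complex.I * (τ / Complex.I) ^ (-(3 / 2) : ℂ) *
        theta M 1 (dft M f) (-1 / τ) := by
    classical
  have hM0 : (M : ℂ) ≠ 0 := Nat.cast_ne_zero.mpr hM.ne'
  have hMZ : (M : ℤ) ≠ 0 := by exact_mod_cast hM.ne'
  have hτ0 : τ ≠ 0 := fun h ↦ by simp [h] at hτ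
  set T : ℂ := (M : ℂ) * τ with hT
  have hTim : 0 < T.im := by
    rw [hT, show ((M : ℂ) * τ).im = (M : ℝ) * τ.im from by simp [Complex.mul_im]]
    exact mul_pos (by exact_mod_cast hM) hτ
  have hTne : T ≠ 0 := mul_ne_zero hM0 hτ0
  set t0 : ℂ := -1 / T with ht0
  have ht0im : 0 < t0.im := by
    rw [ht0, neg_div, neg_im, one_div, inv_im, neg_div, neg_neg]
    exact div_pos hTim (normSq_pos.mpr hTne)
  have hback : -1 / t0 = T := by rw [ht0]; field_simp
  set G : ℤ → ℂ := fun n ↦ (n : ℂ) * f n *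
      Complex.exp (Real.pi * Complex.I * (n : ℂ) ^ 2 * τ / M) with hGdef
  -- residue class sums
  have hres : ∀ a : ℕ, a < M → HasSum (fun m : ℤ ↦ G ((a : ℤ) + (M : ℤ) * m))
      ((f a * (M : ℂ)) * HurwitzZeta.jacobiTheta₂'' ((a : ℂ) / M) T) := by
    intro a _
    have h := (Stmt10.hasSum_theta'' ((a : ℂ) / M) hTim).mul_left (f a * (M : ℂ))
    have e : (fun m : ℤ ↦ (f a * (M : ℂ)) * (((m : ℂ) + (a : ℂ) / M) *
        Complex.exp (Real.pi * Complex.I * ((m : ℂ) + (a : ℂ) / M) ^ 2 * T)))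
        = fun m : ℤ ↦ G ((a : ℤ) + (M : ℤ) * m) := by
      funext m
      simp only [hGdef]
      rw [Stmt10.per hf, hT]
      push_cast
      rw [show (Real.pi : ℂ) * Complex.I * ((m : ℂ) + (a : ℂ) / M) ^ 2 * ((M : ℂ) * τ)
          = Real.pi * Complex.I * ((a : ℂ) + (M : ℂ) * m) ^ 2 * τ / M from by
        field_simp; ring]
      field_simp
      ring
    rwa [e] at h
  have hind : ∀ a ∈ Finset.range M,
      HasSum (fun n : ℤ ↦ if (n % (M : ℤ)).toNat = a then G n else 0)
      ((f a * (M : ℂ)) * HurwitzZeta.jacobiTheta₂'' ((a : ℂ) / M) T) := by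
    intro a ha
    have haM := Finset.mem_range.mp ha
    have hinj : Function.Injective (fun m : ℤ ↦ (a : ℤ) + (M : ℤ) * m) := by
      intro x y hxy
      simp only [] at hxy
      have h1 : (M : ℤ) * x = (M : ℤ) * y := by linarith
      exact mul_left_cancel₀ hMZ h1
    have hzero : ∀ x : ℤ, x ∉ Set.range (fun m : ℤ ↦ (a : ℤ) + (M : ℤ) * m) →
        (if (x % (M : ℤ)).toNat = a then G x else 0) = 0 := by
      intro x hx
      rw [if_neg]
      intro hc
      apply hx
      refine ⟨x / (M : ℤ), ?_⟩
      simp only []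
      have hnn : 0 ≤ x % (M : ℤ) := Int.emod_nonneg x hMZ
      have hde := Int.mul_ediv_add_emod x (M : ℤ)
      omega
    refine (Function.Injective.hasSum_iff hinj hzero).mp ?_
    have e : ((fun n : ℤ ↦ if (n % (M : ℤ)).toNat = a then G n else 0) ∘
        (fun m : ℤ ↦ (a : ℤ) + (M : ℤ) * m)) = fun m : ℤ ↦ G ((a : ℤ) + (M : ℤ) * m) := by
      funext m
      simp only [Function.comp_apply]
      rw [if_pos]
      rw [Int.add_mul_emod_self_left,
        Int.emod_eq_of_lt (Int.natCast_nonneg a) (by exact_mod_cast haM)]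
      omega
    rw [e]
    exact hres a haM
  set SS : ℂ := ∑ a ∈ Finset.range M,
      (f a * (M : ℂ)) * HurwitzZeta.jacobiTheta₂'' ((a : ℂ) / M) T with hSS
  have hGsum : HasSum G SS := by
    have h := hasSum_sum hind
    have e : (fun n : ℤ ↦ ∑ a ∈ Finset.range M,
        if (n % (M : ℤ)).toNat = a then G n else 0) = G := by
      funext n
      rw [Finset.sum_ite_eq (Finset.range M) ((n % (M : ℤ)).toNat) fun _ ↦ G n, if_pos]
      have h1 : n % (M : ℤ) < M := Int.emod_lt_of_pos n (by exact_mod_cast hM)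
      have h2 : 0 ≤ n % (M : ℤ) := Int.emod_nonneg n hMZ
      exact Finset.mem_range.mpr (by omega)
    rwa [e] at h
  -- functional equation rewriting
  have hbase : -Complex.I * t0 ≠ 0 := mul_ne_zero (neg_ne_zero.mpr Complex.I_ne_zero)
      (fun hh ↦ by rw [hh] at ht0im; simp at ht0im)
  have hXne : (-Complex.I * t0) ^ ((3 : ℂ) / 2) ≠ 0 := by
    rw [Ne, Complex.cpow_eq_zero_iff]
    push_neg
    intro hh
    exact absurd hh hbase
  have hθeq : ∀ a : ℕ, HurwitzZeta.jacobiTheta₂'' ((a : ℂ) / M) T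
      = (-Complex.I * t0) ^ ((3 : ℂ) / 2) / (-2 * Real.pi) *
        jacobiTheta₂' ((a : ℂ) / M) t0 := by
    intro a
    have h := HurwitzZeta.jacobiTheta₂'_functional_equation' ((a : ℂ) / M) t0
    rw [hback] at h
    have h2pi : (-2 : ℂ) * Real.pi ≠ 0 :=
      mul_ne_zero (by norm_num) (ofReal_ne_zero.mpr Real.pi_ne_zero)
    rw [h, ← mul_assoc, div_mul_div_comm,
      mul_comm ((-Complex.I * t0) ^ ((3 : ℂ) / 2)) ((-2 : ℂ) * Real.pi),
      div_self (mul_ne_zero h2pi hXne), one_mul]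
  have hres2 : ∀ a ∈ Finset.range M, HasSum (fun m : ℤ ↦ (f a * (M : ℂ)) *
      ((-Complex.I * t0) ^ ((3 : ℂ) / 2) / (-2 * Real.pi)) *
        jacobiTheta₂'_term m ((a : ℂ) / M) t0)
      ((f a * (M : ℂ)) * HurwitzZeta.jacobiTheta₂'' ((a : ℂ) / M) T) := by
    intro a _
    have h := (hasSum_jacobiTheta₂'_term ((a : ℂ) / M) ht0im).mul_left
      ((f a * (M : ℂ)) * ((-Complex.I * t0) ^ ((3 : ℂ) / 2) / (-2 * Real.pi)))
    rw [hθeq a]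
    simpa [mul_assoc] using h
  have hsum2 := hasSum_sum hres2
  set Cc : ℂ := Complex.I * ((Real.sqrt M : ℂ) * M) * (-Complex.I * t0) ^ ((3 : ℂ) / 2) with hCc
  have hterm : (fun m : ℤ ↦ ∑ a ∈ Finset.range M, (f a * (M : ℂ)) *
        ((-Complex.I * t0) ^ ((3 : ℂ) / 2) / (-2 * Real.pi)) *
          jacobiTheta₂'_term m ((a : ℂ) / M) t0)
      = fun m : ℤ ↦ Cc * ((m : ℂ) * dft M f m *
          Complex.exp (Real.pi * Complex.I * (m : ℂ) ^ 2 * (-1 / τ) / M)) := by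
    funext m
    have e1 : ∀ a ∈ Finset.range M, (f a * (M : ℂ)) *
        ((-Complex.I * t0) ^ ((3 : ℂ) / 2) / (-2 * Real.pi)) *
          jacobiTheta₂'_term m ((a : ℂ) / M) t0
        = ((M : ℂ) * ((-Complex.I * t0) ^ ((3 : ℂ) / 2) / (-2 * Real.pi)) *
            (2 * Real.pi * Complex.I * m) *
            Complex.exp (Real.pi * Complex.I * (m : ℂ) ^ 2 * t0)) *
          (f a * Complex.exp (2 * Real.pi * Complex.I * (a : ℂ) * m / M)) := by
      intro a _
      rw [jacobiTheta₂'_term, jacobiTheta₂_term]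
      rw [show 2 * (Real.pi : ℂ) * Complex.I * (m : ℂ) * ((a : ℂ) / M)
          + Real.pi * Complex.I * (m : ℂ) ^ 2 * t0
          = (2 * Real.pi * Complex.I * (a : ℂ) * m / M)
            + (Real.pi * Complex.I * (m : ℂ) ^ 2 * t0) from by ring,
        Complex.exp_add]
      ring
    rw [Finset.sum_congr rfl e1, ← Finset.mul_sum, Stmt10.sum_exp hM hf hodd m]
    have het : (Real.pi : ℂ) * Complex.I * (m : ℂ) ^ 2 * t0
        = Real.pi * Complex.I * (m : ℂ) ^ 2 * (-1 / τ) / M := by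
      rw [ht0, hT]
      field_simp
    have hpi : (Real.pi : ℂ) ≠ 0 := ofReal_ne_zero.mpr Real.pi_ne_zero
    rw [het, hCc]
    field_simp [hpi]
  rw [hterm] at hsum2
  have hCval : Cc = Complex.I * (τ / Complex.I) ^ (-(3 / 2) : ℂ) := by
    rw [hCc, ht0, hT]
    exact Stmt10.const_eq M hM hτ
  have hCne : Cc ≠ 0 := by
    rw [hCc]
    exact mul_ne_zero (mul_ne_zero Complex.I_ne_zero (mul_ne_zero
      (by simp only [ne_eq, ofReal_eq_zero]; positivity) hM0)) hXne
  have hH : HasSum (fun m : ℤ ↦ (m : ℂ) * dft M f m *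
      Complex.exp (Real.pi * Complex.I * (m : ℂ) ^ 2 * (-1 / τ) / M)) (SS / Cc) := by
    have h := hsum2.div_const Cc
    have e : (fun m : ℤ ↦ Cc * ((m : ℂ) * dft M f m *
        Complex.exp (Real.pi * Complex.I * (m : ℂ) ^ 2 * (-1 / τ) / M)) / Cc)
        = fun m : ℤ ↦ (m : ℂ) * dft M f m *
          Complex.exp (Real.pi * Complex.I * (m : ℂ) ^ 2 * (-1 / τ) / M) := by
      funext m
      rw [mul_div_cancel_left₀ _ hCne]
    rwa [e] at h
  have hdodd : ∀ n : ℤ, dft M f (-n) = -dft M f n := by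
    intro n
    have h := Stmt10.sum_exp hM hf hodd n
    have e : ∀ ℓ ∈ Finset.range M, f ℓ *
        Complex.exp (-2 * Real.pi * Complex.I * ℓ * ((-n : ℤ) : ℂ) / M)
        = f ℓ * Complex.exp (2 * Real.pi * Complex.I * ℓ * n / M) := by
      intro ℓ _
      congr 1
      push_cast
      ring
    rw [dft, Finset.sum_congr rfl e, h]
    have hs : ((Real.sqrt M : ℝ) : ℂ) ≠ 0 := by
      simp only [ne_eq, ofReal_eq_zero]
      positivity
    field_simp
  have hθ1 : theta M 1 f τ = SS / 2 := by
    refine Stmt10.half M hodd τ ?_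
    rw [hGdef] at hGsum
    exact hGsum
  have hθ2 : theta M 1 (dft M f) (-1 / τ) = (SS / Cc) / 2 :=
    Stmt10.half M hdodd (-1 / τ) hH
  rw [hθ1, hθ2, ← hCval]
  field_simp
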